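/- (Nonzero coefficients) In a linear (k,α) MSR exact-regenerating code in canonical form with k ≥ α + 2 and β = 1, for every non-systematic node m, every l ∈ {α+1,…,k}, and every i ∈ {1,…,α}, the coefficient x^{(m,l)}_i (the i-th coordinate of the combination vector x^{(m,l)} with v^{(m,l)} = x^{(m,l)} G^{(m)}) is nonzero. -/

import Mathlib

open Matrix

lemma aux_block_indep {F : Type*} [Field F] {k α s : ℕ}
    (G : (Fin k ⊕ Fin s) → Matrix (Fin α) (Fin k × Fin α) F)
    (hsys : ∀ (m : Fin k) (i : Fin α) (q : Fin k × Fin α),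
      G (Sum.inl m) i q = if q.1 = m ∧ q.2 = i then 1 else 0)
    (hrecon : ∀ f : Fin k → (Fin k ⊕ Fin s), Function.Injective f →
      IsUnit (Matrix.det (Matrix.of fun p q : Fin k × Fin α => G (f p.1) p.2 q)))
    (n : Fin s) (t : Fin k) :
    LinearIndependent F (fun j : Fin α => fun j' : Fin α => G (Sum.inr n) j (t, j')) := by
  set f : Fin k → Fin k ⊕ Fin s := fun p => if p = t then Sum.inr n else Sum.inl p with hf
  have hinj : Function.Injective f := by
    intro a b hab
    by_cases ha : a = t <;> by_cases hb : b = t <;>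
      simp [f, ha, hb] at hab <;> simp [ha, hb, hab]
  have hrows : LinearIndependent F
      (fun p : Fin k × Fin α => (Matrix.of fun p q : Fin k × Fin α => G (f p.1) p.2 q) p) :=
    Matrix.linearIndependent_rows_iff_isUnit.mpr
      ((Matrix.isUnit_iff_isUnit_det _).mpr (hrecon f hinj))
  rw [Fintype.linearIndependent_iff]
  intro μ hμ
  have hμ' : ∀ j' : Fin α, ∑ j, μ j * G (Sum.inr n) j (t, j') = 0 := by
    intro j'
    have := congrFun hμ j'
    simpa [Finset.sum_apply] using this
  set c : Fin k × Fin α → F := fun p =>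
    if p.1 = t then μ p.2 else - ∑ j, μ j * G (Sum.inr n) j (p.1, p.2) with hc
  have h0 : ∑ p : Fin k × Fin α,
      c p • (Matrix.of fun p q : Fin k × Fin α => G (f p.1) p.2 q) p = 0 := by
    funext q
    obtain ⟨q1, q2⟩ := q
    simp only [Finset.sum_apply, Pi.smul_apply, smul_eq_mul, Matrix.of_apply, Pi.zero_apply]
    rw [Fintype.sum_prod_type]
    have hterm : ∀ p1 : Fin k, ∑ p2 : Fin α, c (p1, p2) * G (f p1) p2 (q1, q2)
        = if p1 = t then ∑ j, μ j * G (Sum.inr n) j (q1, q2)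
          else (if q1 = p1 then c (p1, q2) else 0) := by
      intro p1
      by_cases h1 : p1 = t
      · subst h1
        simp [f, c]
      · have hfp : f p1 = Sum.inl p1 := by simp [f, h1]
        rw [if_neg h1]
        by_cases hq : q1 = p1
        · rw [if_pos hq]
          rw [Finset.sum_eq_single q2]
          · rw [hfp, hsys]
            simp [hq]
          · intro b _ hb
            rw [hfp, hsys]
            simp [Ne.symm hb]
          · simp
        · rw [if_neg hq]
          apply Finset.sum_eq_zero
          intro b _
          rw [hfp, hsys]
          simp [hq]
    simp only [hterm]
    by_cases hq : q1 = t
    · subst hq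
      have heq : ∀ p1 : Fin k, (if p1 = q1 then ∑ j, μ j * G (Sum.inr n) j (q1, q2)
            else (if q1 = p1 then c (p1, q2) else 0)) =
          (if p1 = q1 then ∑ j, μ j * G (Sum.inr n) j (q1, q2) else 0) := by
        intro p1
        by_cases h1 : p1 = q1
        · simp [h1]
        · simp [h1, Ne.symm h1]
      rw [Finset.sum_congr rfl fun p1 _ => heq p1, Finset.sum_ite_eq' Finset.univ q1]
      simpa using hμ' q2
    · have heq : ∀ p1 : Fin k, (if p1 = t then ∑ j, μ j * G (Sum.inr n) j (q1, q2)
            else (if q1 = p1 then c (p1, q2) else 0)) =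
          (if p1 = t then ∑ j, μ j * G (Sum.inr n) j (q1, q2) else 0)
            + (if p1 = q1 then c (q1, q2) else 0) := by
        intro p1
        by_cases h1 : p1 = t
        · subst h1
          simp [fun h : p1 = q1 => hq (h ▸ rfl), Ne.symm hq]
        · by_cases h2 : p1 = q1
          · subst h2
            simp [h1, eq_comm]
          · have h3 : ¬ q1 = p1 := fun h => h2 h.symm
            simp [h1, h2, h3]
      rw [Finset.sum_congr rfl fun p1 _ => heq p1, Finset.sum_add_distrib,
        Finset.sum_ite_eq' Finset.univ t, Finset.sum_ite_eq' Finset.univ q1]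
      simp [c, hq]
  have hall := Fintype.linearIndependent_iff.mp hrows c h0
  intro j
  have := hall (t, j)
  simpa [c] using this

section
variable {F : Type*} [Field F] {k α s : ℕ}
  (G : (Fin k ⊕ Fin s) → Matrix (Fin α) (Fin k × Fin α) F)
  (x : (Fin k ⊕ Fin s) → Fin k → Fin α → F)

/-- master repair equation, simplified using systematic structure -/
lemma aux_master
    (hsys : ∀ (m : Fin k) (i : Fin α) (q : Fin k × Fin α),
      G (Sum.inl m) i q = if q.1 = m ∧ q.2 = i then 1 else 0)
    (hrepair : ∀ (l : Fin k) (D : Finset (Fin s)), D.card = α →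
      ∃ Y : Fin α → (Fin k ⊕ Fin s) → F, ∀ (i : Fin α) (q : Fin k × Fin α),
        G (Sum.inl l) i q =
          (∑ m : Fin k, if m ≠ l then
              Y i (Sum.inl m) * ∑ j, x (Sum.inl m) l j * G (Sum.inl m) j q else 0)
            + ∑ m ∈ D, Y i (Sum.inr m) * ∑ j, x (Sum.inr m) l j * G (Sum.inr m) j q)
    (t₀ : Fin k) (D : Finset (Fin s)) (hD : D.card = α) :
    ∃ Y : Fin α → (Fin k ⊕ Fin s) → F, ∀ (i : Fin α) (q : Fin k × Fin α),
      (if q.1 = t₀ ∧ q.2 = i then (1:F) else 0) =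
        (if q.1 = t₀ then 0 else Y i (Sum.inl q.1) * x (Sum.inl q.1) t₀ q.2)
          + ∑ n ∈ D, Y i (Sum.inr n) * ∑ j, x (Sum.inr n) t₀ j * G (Sum.inr n) j q := by
  obtain ⟨Y, hY⟩ := hrepair t₀ D hD
  refine ⟨Y, fun i q => ?_⟩
  have h := hY i q
  rw [hsys] at h
  rw [h]
  congr 1
  have hinner : ∀ m : Fin k, (∑ j, x (Sum.inl m) t₀ j * G (Sum.inl m) j q)
      = if q.1 = m then x (Sum.inl m) t₀ q.2 else 0 := by
    intro m
    by_cases hq : q.1 = m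
    · rw [if_pos hq]
      rw [Finset.sum_eq_single q.2]
      · rw [hsys]; simp [hq]
      · intro b _ hb; rw [hsys]; simp [Ne.symm hb]
      · simp
    · rw [if_neg hq]
      apply Finset.sum_eq_zero
      intro b _; rw [hsys]; simp [hq]
  rw [Finset.sum_congr rfl (fun m _ => by rw [hinner m])]
  rw [Finset.sum_eq_single q.1]
  · by_cases hq : q.1 = t₀
    · simp [hq]
    · simp [hq]
  · intro b _ hb
    have h3 : ¬ q.1 = b := fun h => hb h.symm
    by_cases hbt : b = t₀ <;> simp [hbt, h3]
  · simp

/-- from the master equation: matrices over Fin α with Yn * V(t₀) = 1 -/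
lemma aux_matrices
    (hsys : ∀ (m : Fin k) (i : Fin α) (q : Fin k × Fin α),
      G (Sum.inl m) i q = if q.1 = m ∧ q.2 = i then 1 else 0)
    (hrepair : ∀ (l : Fin k) (D : Finset (Fin s)), D.card = α →
      ∃ Y : Fin α → (Fin k ⊕ Fin s) → F, ∀ (i : Fin α) (q : Fin k × Fin α),
        G (Sum.inl l) i q =
          (∑ m : Fin k, if m ≠ l then
              Y i (Sum.inl m) * ∑ j, x (Sum.inl m) l j * G (Sum.inl m) j q else 0)
            + ∑ m ∈ D, Y i (Sum.inr m) * ∑ j, x (Sum.inr m) l j * G (Sum.inr m) j q)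
    (t₀ : Fin k) (D : Finset (Fin s)) (hD : D.card = α) :
    ∃ (Y : Fin α → (Fin k ⊕ Fin s) → F) (e : {d // d ∈ D} ≃ Fin α),
      (Matrix.of (fun i a : Fin α => Y i (Sum.inr ↑(e.symm a))) *
        Matrix.of (fun a j' : Fin α =>
          ∑ j, x (Sum.inr ↑(e.symm a)) t₀ j * G (Sum.inr ↑(e.symm a)) j (t₀, j')) = 1) ∧
      (∀ (i : Fin α) (q : Fin k × Fin α),
      (if q.1 = t₀ ∧ q.2 = i then (1:F) else 0) =
        (if q.1 = t₀ then 0 else Y i (Sum.inl q.1) * x (Sum.inl q.1) t₀ q.2)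
          + ∑ n ∈ D, Y i (Sum.inr n) * ∑ j, x (Sum.inr n) t₀ j * G (Sum.inr n) j q) := by
  obtain ⟨Y, hY⟩ := aux_master G x hsys hrepair t₀ D hD
  refine ⟨Y, D.equivFinOfCardEq hD, ?_, hY⟩
  ext i j'
  rw [Matrix.mul_apply, Matrix.one_apply]
  set e := D.equivFinOfCardEq hD
  have h2 : ∑ n ∈ D, Y i (Sum.inr n) * ∑ j, x (Sum.inr n) t₀ j * G (Sum.inr n) j (t₀, j')
      = if j' = i then (1:F) else 0 := by
    have := hY i (t₀, j')
    simpa using this.symm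
  calc ∑ a : Fin α, Matrix.of (fun i a : Fin α => Y i (Sum.inr ↑(e.symm a))) i a *
          Matrix.of (fun a j' : Fin α =>
            ∑ j, x (Sum.inr ↑(e.symm a)) t₀ j * G (Sum.inr ↑(e.symm a)) j (t₀, j')) a j'
      = ∑ d : {d // d ∈ D}, Y i (Sum.inr ↑d) *
          ∑ j, x (Sum.inr ↑d) t₀ j * G (Sum.inr ↑d) j (t₀, j') := by
        simp only [Matrix.of_apply]
        exact Fintype.sum_equiv e.symm _ _ (fun a => rfl)
    _ = ∑ n ∈ D, Y i (Sum.inr n) * ∑ j, x (Sum.inr n) t₀ j * G (Sum.inr n) j (t₀, j') := by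
        exact Finset.sum_coe_sort D (fun n => Y i (Sum.inr n) *
          ∑ j, x (Sum.inr n) t₀ j * G (Sum.inr n) j (t₀, j'))
    _ = (if j' = i then 1 else 0) := h2
    _ = (if i = j' then 1 else 0) := by
        by_cases h : j' = i
        · simp [h]
        · have h3 : ¬ i = j' := fun hh => h hh.symm
          simp [h, h3]

end

section
variable {F : Type*} [Field F] {k α s : ℕ}
  (G : (Fin k ⊕ Fin s) → Matrix (Fin α) (Fin k × Fin α) F)
  (x : (Fin k ⊕ Fin s) → Fin k → Fin α → F)

/-- L2a: vectors passed by the α non-systematic helpers, restricted to block t₀,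
are linearly independent -/
lemma aux_passed_indep
    (hsys : ∀ (m : Fin k) (i : Fin α) (q : Fin k × Fin α),
      G (Sum.inl m) i q = if q.1 = m ∧ q.2 = i then 1 else 0)
    (hrepair : ∀ (l : Fin k) (D : Finset (Fin s)), D.card = α →
      ∃ Y : Fin α → (Fin k ⊕ Fin s) → F, ∀ (i : Fin α) (q : Fin k × Fin α),
        G (Sum.inl l) i q =
          (∑ m : Fin k, if m ≠ l then
              Y i (Sum.inl m) * ∑ j, x (Sum.inl m) l j * G (Sum.inl m) j q else 0)
            + ∑ m ∈ D, Y i (Sum.inr m) * ∑ j, x (Sum.inr m) l j * G (Sum.inr m) j q)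
    (t₀ : Fin k) (D : Finset (Fin s)) (hD : D.card = α) :
    LinearIndependent F (fun d : {d // d ∈ D} => fun j' : Fin α =>
      ∑ j, x (Sum.inr ↑d) t₀ j * G (Sum.inr ↑d) j (t₀, j')) := by
  obtain ⟨Y, e, hYV, hY⟩ := aux_matrices G x hsys hrepair t₀ D hD
  have hVY := mul_eq_one_comm.mp hYV
  rw [Fintype.linearIndependent_iff]
  intro μ hμ
  set Yn := Matrix.of (fun i a : Fin α => Y i (Sum.inr ↑(e.symm a)))
  set V := Matrix.of (fun a j' : Fin α =>
    ∑ j, x (Sum.inr ↑(e.symm a)) t₀ j * G (Sum.inr ↑(e.symm a)) j (t₀, j'))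
  set μ' : Fin α → F := fun a => μ (e.symm a) with hμ'def
  have hμV : Matrix.vecMul μ' V = 0 := by
    funext j'
    rw [Matrix.vecMul, dotProduct]
    have : ∀ a : Fin α, μ' a * V a j'
        = μ (e.symm a) * ∑ j, x (Sum.inr ↑(e.symm a)) t₀ j * G (Sum.inr ↑(e.symm a)) j (t₀, j') :=
      fun a => rfl
    simp only [this]
    rw [Fintype.sum_equiv e.symm _ (fun d => μ d * ∑ j, x (Sum.inr ↑d) t₀ j *
      G (Sum.inr ↑d) j (t₀, j')) (fun a => rfl)]
    have := congrFun hμ j'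
    simpa [Finset.sum_apply] using this
  have hμ'0 : μ' = 0 := by
    calc μ' = Matrix.vecMul μ' 1 := by rw [Matrix.vecMul_one]
    _ = Matrix.vecMul μ' (V * Yn) := by rw [hVY]
    _ = Matrix.vecMul (Matrix.vecMul μ' V) Yn := by rw [Matrix.vecMul_vecMul]
    _ = 0 := by rw [hμV, Matrix.zero_vecMul]
  intro d
  have : μ' (e d) = 0 := by rw [hμ'0]; rfl
  simpa [hμ'def] using this

/-- L2b: interference alignment. -/
lemma aux_align
    (hα : 0 < α) (hs : α ≤ s)
    (hsys : ∀ (m : Fin k) (i : Fin α) (q : Fin k × Fin α),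
      G (Sum.inl m) i q = if q.1 = m ∧ q.2 = i then 1 else 0)
    (hrepair : ∀ (l : Fin k) (D : Finset (Fin s)), D.card = α →
      ∃ Y : Fin α → (Fin k ⊕ Fin s) → F, ∀ (i : Fin α) (q : Fin k × Fin α),
        G (Sum.inl l) i q =
          (∑ m : Fin k, if m ≠ l then
              Y i (Sum.inl m) * ∑ j, x (Sum.inl m) l j * G (Sum.inl m) j q else 0)
            + ∑ m ∈ D, Y i (Sum.inr m) * ∑ j, x (Sum.inr m) l j * G (Sum.inr m) j q)
    (t₀ t : Fin k) (ht : t ≠ t₀) (n : Fin s) :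
    ∃ c : F, ∀ j' : Fin α,
      ∑ j, x (Sum.inr n) t₀ j * G (Sum.inr n) j (t, j') = c * x (Sum.inl t) t₀ j' := by
  obtain ⟨D, hnD, -, hD⟩ := Finset.exists_subsuperset_card_eq (n := α)
    (Finset.subset_univ {n}) (by simp only [Finset.card_singleton]; omega) (by simpa using hs)
  have hn : n ∈ D := hnD (Finset.mem_singleton_self n)
  obtain ⟨Y, e, hYV, hY⟩ := aux_matrices G x hsys hrepair t₀ D hD
  have hVY := mul_eq_one_comm.mp hYV
  set Yn := Matrix.of (fun i a : Fin α => Y i (Sum.inr ↑(e.symm a))) with hYn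
  set V := Matrix.of (fun a j' : Fin α =>
    ∑ j, x (Sum.inr ↑(e.symm a)) t₀ j * G (Sum.inr ↑(e.symm a)) j (t₀, j')) with hV
  set Vt := Matrix.of (fun a j' : Fin α =>
    ∑ j, x (Sum.inr ↑(e.symm a)) t₀ j * G (Sum.inr ↑(e.symm a)) j (t, j')) with hVt
  -- interference equation: Yn * Vt = vecMulVec c' w
  have hIE : Yn * Vt = Matrix.vecMulVec (fun i => - Y i (Sum.inl t)) (x (Sum.inl t) t₀) := by
    ext i j'
    rw [Matrix.mul_apply, Matrix.vecMulVec_apply]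
    have hstep : ∀ a : Fin α, Yn i a * Vt a j'
        = Y i (Sum.inr ↑(e.symm a)) * ∑ j, x (Sum.inr ↑(e.symm a)) t₀ j *
            G (Sum.inr ↑(e.symm a)) j (t, j') := fun a => rfl
    simp only [hstep]
    rw [Fintype.sum_equiv e.symm _ (fun d : {d // d ∈ D} => Y i (Sum.inr ↑d) *
      ∑ j, x (Sum.inr ↑d) t₀ j * G (Sum.inr ↑d) j (t, j')) (fun a => rfl),
      Finset.sum_coe_sort D (fun n' => Y i (Sum.inr n') *
      ∑ j, x (Sum.inr n') t₀ j * G (Sum.inr n') j (t, j'))]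
    have := hY i (t, j')
    simp only [ht, if_neg ht, false_and, if_false] at this
    linear_combination -this
  have hVtEq : Vt = V * (Yn * Vt) := by
    rw [← Matrix.mul_assoc, hVY, Matrix.one_mul]
  refine ⟨∑ i, V (e ⟨n, hn⟩) i * (- Y i (Sum.inl t)), fun j' => ?_⟩
  have h1 : ∑ j, x (Sum.inr n) t₀ j * G (Sum.inr n) j (t, j') = Vt (e ⟨n, hn⟩) j' := by
    rw [hVt]
    simp
  rw [h1, hVtEq, hIE, Matrix.mul_apply]
  simp only [Matrix.vecMulVec_apply]
  rw [Finset.sum_mul]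
  exact Finset.sum_congr rfl (fun i _ => by ring)

end

lemma aux_sum_fun {F : Type*} [Field F] {ι : Type*} [Fintype ι] {κ : Type*}
    (g : ι → F) (v : ι → κ → F) :
    (∑ j, g j • v j) = 0 ↔ ∀ j', ∑ j, g j * v j j' = 0 := by
  constructor
  · intro h j'
    have := congrFun h j'
    simpa [Finset.sum_apply] using this
  · intro h
    funext j'
    simpa [Finset.sum_apply] using h j'


/-- Nonzero coefficients: for `k ≥ α + 2`, in a linear `(k,α)` MSR exact-regenerating code
in canonical form (node `m` passes its `i`-th row for regeneration of systematic node
`i ≤ α`), every coordinate of the combination vector `x^{(m,l)}` is nonzero for every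
non-systematic node `m` and every `l ∈ {α+1,…,k}`. -/
theorem statement15 {F : Type*} [Field F] {k α s : ℕ}
    (hk : α + 2 ≤ k) (hs : α ≤ s)
    (G : (Fin k ⊕ Fin s) → Matrix (Fin α) (Fin k × Fin α) F)
    (x : (Fin k ⊕ Fin s) → Fin k → Fin α → F)
    (hsys : ∀ (m : Fin k) (i : Fin α) (q : Fin k × Fin α),
      G (Sum.inl m) i q = if q.1 = m ∧ q.2 = i then 1 else 0)
    (hrecon : ∀ f : Fin k → (Fin k ⊕ Fin s), Function.Injective f →
      IsUnit (Matrix.det (Matrix.of fun p q : Fin k × Fin α => G (f p.1) p.2 q)))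
    (hcanon : ∀ (m : Fin s) (i : Fin k) (hi : (i : ℕ) < α),
      x (Sum.inr m) i = Pi.single (⟨(i : ℕ), hi⟩ : Fin α) 1)
    (hrepair : ∀ (l : Fin k) (D : Finset (Fin s)), D.card = α →
      ∃ Y : Fin α → (Fin k ⊕ Fin s) → F, ∀ (i : Fin α) (q : Fin k × Fin α),
        G (Sum.inl l) i q =
          (∑ m : Fin k, if m ≠ l then
              Y i (Sum.inl m) * ∑ j, x (Sum.inl m) l j * G (Sum.inl m) j q else 0)
            + ∑ m ∈ D, Y i (Sum.inr m) * ∑ j, x (Sum.inr m) l j * G (Sum.inr m) j q) :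
    ∀ (m : Fin s) (l : Fin k), α ≤ (l : ℕ) → ∀ i : Fin α, x (Sum.inr m) l i ≠ 0 := by
  classical
  intro m l hl i hxi
  have hα : 0 < α := i.pos
  -- a second non-systematic-looking index l₂ ≥ α, l₂ ≠ l
  obtain ⟨l₂, hl₂, hll₂⟩ : ∃ l₂ : Fin k, α ≤ (l₂ : ℕ) ∧ l₂ ≠ l := by
    by_cases h : (l : ℕ) = α
    · refine ⟨⟨α + 1, by omega⟩, by simp, Fin.ne_of_val_ne ?_⟩
      simp [h]
    · refine ⟨⟨α, by omega⟩, by simp, Fin.ne_of_val_ne ?_⟩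
      simp
      omega
  -- embedding of Fin α into Fin k
  set jk : Fin α → Fin k := fun j => ⟨(j : ℕ), by omega⟩ with hjk_def
  have hjk_val : ∀ j : Fin α, ((jk j : Fin k) : ℕ) = (j : ℕ) := by
    intro j; rw [hjk_def]
  have hjk_ne : ∀ (j : Fin α) (t : Fin k), α ≤ (t : ℕ) → t ≠ jk j := by
    intro j t h
    apply Fin.ne_of_val_ne
    rw [hjk_val j]
    have := j.2
    omega
  -- F1 : alignment of individual rows of non-systematic nodes
  have hF1 : ∀ (n : Fin s) (j : Fin α) (t : Fin k), t ≠ jk j →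
      ∃ c : F, ∀ j', G (Sum.inr n) j (t, j') = c * x (Sum.inl t) (jk j) j' := by
    intro n j t ht
    obtain ⟨c, hc⟩ := aux_align G x hα hs hsys hrepair (jk j) t ht n
    refine ⟨c, fun j' => ?_⟩
    rw [← hc j']
    have hx : x (Sum.inr n) (jk j) = Pi.single j 1 := by
      have h2 := hcanon n (jk j) (by rw [hjk_val j]; exact j.2)
      rw [h2]
    rw [hx]
    rw [Finset.sum_eq_single j]
    · simp
    · intro b _ hb
      rw [Pi.single_eq_of_ne hb]
      simp
    · simp
  -- choose D containing m
  obtain ⟨D, hmD, -, hD⟩ := Finset.exists_subsuperset_card_eq (n := α)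
    (Finset.subset_univ {m}) (by simp only [Finset.card_singleton]; omega) (by simpa using hs)
  have hm : m ∈ D := hmD (Finset.mem_singleton_self m)
  have hVind := aux_passed_indep G x hsys hrepair l D hD
  have hxm_ne : x (Sum.inr m) l ≠ 0 := by
    intro h0
    apply hVind.ne_zero ⟨m, hm⟩
    funext j'
    simp [h0]
  -- node m's block-l₂ row alignment coefficients
  choose b hb using fun j => hF1 m j l₂ (hjk_ne j l₂ hl₂)
  have hbne : ∀ j, b j ≠ 0 := by
    intro j h0
    apply (aux_block_indep G hsys hrecon m l₂).ne_zero j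
    funext j'
    simp [hb j j', h0]
  -- independence of the directions z j = x (inl l₂) (jk j)
  have hzind : LinearIndependent F (fun j : Fin α => x (Sum.inl l₂) (jk j)) := by
    rw [Fintype.linearIndependent_iff]
    intro μ hμ0
    have h0 : ∑ j, (μ j * (b j)⁻¹) • (fun j' => G (Sum.inr m) j (l₂, j')) = 0 := by
      rw [aux_sum_fun]
      intro j'
      have h1 : ∀ j : Fin α, (μ j * (b j)⁻¹) * G (Sum.inr m) j (l₂, j')
          = μ j * x (Sum.inl l₂) (jk j) j' := by
        intro j
        rw [hb j j']
        field_simp [hbne j]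
      rw [Finset.sum_congr rfl fun j _ => h1 j]
      exact (aux_sum_fun μ (fun j => x (Sum.inl l₂) (jk j))).mp hμ0 j'
    have hres := Fintype.linearIndependent_iff.mp
      (aux_block_indep G hsys hrecon m l₂) (fun j => μ j * (b j)⁻¹) h0
    intro j
    have := hres j
    have hbj := hbne j
    field_simp at this
    simpa using this
  -- alignment of node m's passed vector at block l₂
  obtain ⟨cm, hcm⟩ := aux_align G x hα hs hsys hrepair l l₂ hll₂ m
  have hcm_ne : cm ≠ 0 := by
    intro h0
    apply hxm_ne
    have h1 : ∑ j, (x (Sum.inr m) l j) • (fun j' => G (Sum.inr m) j (l₂, j')) = 0 := by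
      rw [aux_sum_fun]
      intro j'
      rw [hcm j', h0, zero_mul]
    have := Fintype.linearIndependent_iff.mp
      (aux_block_indep G hsys hrecon m l₂) _ h1
    funext j
    exact this j
  -- every non-systematic node has vanishing i-th coefficient
  have hall : ∀ n : Fin s, x (Sum.inr n) l i = 0 := by
    intro n
    choose b' hb' using fun j => hF1 n j l₂ (hjk_ne j l₂ hl₂)
    have hb'i : b' i ≠ 0 := by
      intro h0
      apply (aux_block_indep G hsys hrecon n l₂).ne_zero i
      funext j'
      simp [hb' i j', h0]
    obtain ⟨cn, hcn⟩ := aux_align G x hα hs hsys hrepair l l₂ hll₂ n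
    have e1 : ∀ j', ∑ j, (x (Sum.inr n) l j * b' j) * x (Sum.inl l₂) (jk j) j'
        = cn * x (Sum.inl l₂) l j' := by
      intro j'
      rw [← hcn j']
      refine Finset.sum_congr rfl fun j _ => ?_
      rw [hb' j j']
      ring
    have e2 : ∀ j', ∑ j, (x (Sum.inr m) l j * b j) * x (Sum.inl l₂) (jk j) j'
        = cm * x (Sum.inl l₂) l j' := by
      intro j'
      rw [← hcm j']
      refine Finset.sum_congr rfl fun j _ => ?_
      rw [hb j j']
      ring
    set μ : Fin α → F := fun j => x (Sum.inr n) l j * b' j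
      - cn * cm⁻¹ * (x (Sum.inr m) l j * b j) with hμdef
    have hz0 : ∑ j, μ j • (x (Sum.inl l₂) (jk j)) = 0 := by
      rw [aux_sum_fun]
      intro j'
      have hsplit : ∀ j : Fin α, μ j * x (Sum.inl l₂) (jk j) j'
          = (x (Sum.inr n) l j * b' j) * x (Sum.inl l₂) (jk j) j'
            - cn * cm⁻¹ * ((x (Sum.inr m) l j * b j) * x (Sum.inl l₂) (jk j) j') := by
        intro j
        rw [hμdef]
        ring
      rw [Finset.sum_congr rfl fun j _ => hsplit j, Finset.sum_sub_distrib,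
        ← Finset.mul_sum, e1 j', e2 j']
      field_simp [hcm_ne]
      ring
    have := Fintype.linearIndependent_iff.mp hzind μ hz0 i
    rw [hμdef] at this
    simp only [hxi, zero_mul, mul_zero, sub_zero] at this
    exact (mul_eq_zero.mp this).resolve_right hb'i
  -- final contradiction: the α passed vectors live in a span of α-1 vectors
  set T : Finset (Fin α → F) :=
    (Finset.univ.erase i).image (fun j => x (Sum.inl l) (jk j)) with hT
  set W := Submodule.span F (T : Set (Fin α → F)) with hW
  have hmem : ∀ d : {d // d ∈ D},
      (fun j' => ∑ j, x (Sum.inr ↑d) l j * G (Sum.inr ↑d) j (l, j')) ∈ W := by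
    intro d
    choose b'' hb'' using fun j => hF1 ↑d j l (hjk_ne j l hl)
    have heq : (fun j' => ∑ j, x (Sum.inr ↑d) l j * G (Sum.inr ↑d) j (l, j'))
        = ∑ j ∈ Finset.univ.erase i,
            (x (Sum.inr ↑d) l j * b'' j) • (x (Sum.inl l) (jk j)) := by
      funext j'
      rw [Finset.sum_apply]
      have h1 : ∀ j : Fin α, x (Sum.inr ↑d) l j * G (Sum.inr ↑d) j (l, j')
          = (x (Sum.inr ↑d) l j * b'' j) * x (Sum.inl l) (jk j) j' := by
        intro j
        rw [hb'' j j']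
        ring
      rw [Finset.sum_congr rfl fun j _ => h1 j]
      rw [← Finset.sum_erase_add Finset.univ _ (Finset.mem_univ i)]
      rw [hall ↑d]
      simp
    rw [heq]
    apply Submodule.sum_mem
    intro j hj
    apply Submodule.smul_mem
    apply Submodule.subset_span
    have hmemT : x (Sum.inl l) (jk j) ∈ T := by
      rw [hT]
      exact Finset.mem_image_of_mem _ hj
    exact Finset.mem_coe.mpr hmemT
  have hv' : LinearIndependent F (fun d : {d // d ∈ D} =>
      (⟨_, hmem d⟩ : W)) := by
    apply LinearIndependent.of_comp W.subtype
    exact hVind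
  have hfin : Module.Finite F W := by infer_instance
  have hcard1 : Fintype.card {d // d ∈ D} ≤ Module.finrank F W :=
    hv'.fintype_card_le_finrank
  have hcard2 : Module.finrank F W ≤ T.card := by
    have := finrank_span_finset_le_card (R := F) T
    rw [Set.finrank] at this
    exact this
  have hc3 : Fintype.card {d // d ∈ D} = α := by
    rw [Fintype.card_coe, hD]
  have hc4 : T.card ≤ α - 1 := by
    calc T.card ≤ (Finset.univ.erase i).card := by
          rw [hT]; exact Finset.card_image_le
    _ = α - 1 := by rw [Finset.card_erase_of_mem (Finset.mem_univ i)]; simp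
  omega
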